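/- Let s, t be distinct points of the Euclidean plane ℝ², let p be a point of the open segment between s and t, and let γ : ℝ → ℝ² be continuous on [0,1] with γ(0) = s, γ(1) = t, and p ∉ γ([0,1]). Then eVariationOn γ [0,1] > edist(s, t). -/

import Mathlib

open scoped ENNReal

/-- A path between distinct points `s` and `t` that avoids a point `p` of the open segment
between them is strictly longer than the Euclidean distance from `s` to `t`. -/
theorem eVariationOn_gt_edist_of_avoids (s t p : EuclideanSpace ℝ (Fin 2))
    (hst : s ≠ t) (hp : p ∈ openSegment ℝ s t)
    (γ : ℝ → EuclideanSpace ℝ (Fin 2)) (hγ : ContinuousOn γ (Set.Icc 0 1))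
    (h0 : γ 0 = s) (h1 : γ 1 = t) (hmiss : p ∉ γ '' Set.Icc 0 1) :
    edist s t < eVariationOn γ (Set.Icc 0 1) := by
  obtain ⟨a, b, ha, hb, hab, hpab⟩ := hp
  have hts : (0:ℝ) < ‖t - s‖ ^ 2 := by
    have h' : 0 < ‖t - s‖ := norm_pos_iff.mpr (sub_ne_zero.mpr hst.symm)
    positivity
  set f : ℝ → ℝ := fun x => inner ℝ (γ x - p) (t - s) with hf
  have hfc : ContinuousOn f (Set.Icc 0 1) :=
    (hγ.sub continuousOn_const).inner continuousOn_const
  have hb' : b = 1 - a := by linarith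
  subst hb'
  have hsp : s - p = (-(1-a)) • (t - s) := by rw [← hpab]; module
  have htp : t - p = a • (t - s) := by rw [← hpab]; module
  have hf0 : f 0 = -(1-a) * ‖t - s‖ ^ 2 := by
    simp only [hf, h0, hsp, real_inner_smul_left, real_inner_self_eq_norm_sq]
  have hf1 : f 1 = a * ‖t - s‖ ^ 2 := by
    simp only [hf, h1, htp, real_inner_smul_left, real_inner_self_eq_norm_sq]
  have h0mem : (0:ℝ) ∈ Set.Icc (f 0) (f 1) := by
    constructor
    · rw [hf0]; nlinarith
    · rw [hf1]; nlinarith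
  obtain ⟨u, hu, hfu⟩ := intermediate_value_Icc (by norm_num : (0:ℝ) ≤ 1) hfc h0mem
  set q := γ u with hq
  have hqp : q ≠ p := fun h => hmiss ⟨u, hu, h⟩
  have hqseg : q ∉ segment ℝ s t := by
    rintro ⟨c, d, hc, hd, hcd, hcd'⟩
    have hqp' : q - p = (a - c) • (t - s) := by
      rw [← hcd', ← hpab]
      have : d = 1 - c := by linarith
      rw [this]; module
    have : f u = (a - c) * ‖t - s‖ ^ 2 := by
      simp only [hf, ← hq, hqp', real_inner_smul_left, real_inner_self_eq_norm_sq]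
    rw [hfu] at this
    have hac : a = c := by nlinarith
    apply hqp
    rw [← hcd', ← hpab, hac]
    have : d = 1 - a := by linarith
    rw [this, hac]
  have htri : dist s t < dist s q + dist q t := by
    rcases lt_or_eq_of_le (dist_triangle s q t) with h | h
    · exact h
    · exact absurd (dist_add_dist_eq_iff.mp h.symm).mem_segment hqseg
  have hedist : edist s t < edist s q + edist q t := by
    rw [edist_dist, edist_dist, edist_dist, ← ENNReal.ofReal_add dist_nonneg dist_nonneg]
    exact (ENNReal.ofReal_lt_ofReal_iff_of_nonneg dist_nonneg).mpr htri
  refine hedist.trans_le ?_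
  have key := eVariationOn.Icc_add_Icc γ (s := Set.Icc (0:ℝ) 1) hu.1 hu.2
    (Set.mem_Icc.mpr ⟨hu.1, hu.2⟩)
  have e1 : edist s q ≤ eVariationOn γ (Set.Icc (0:ℝ) 1 ∩ Set.Icc 0 u) := by
    rw [← h0, hq]
    exact eVariationOn.edist_le γ ⟨⟨le_refl _, by norm_num⟩, le_refl _, hu.1⟩
      ⟨⟨hu.1, hu.2⟩, hu.1, le_refl _⟩
  have e2 : edist q t ≤ eVariationOn γ (Set.Icc (0:ℝ) 1 ∩ Set.Icc u 1) := by
    rw [← h1, hq]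
    exact eVariationOn.edist_le γ ⟨⟨hu.1, hu.2⟩, le_refl _, hu.2⟩
      ⟨⟨by norm_num, le_refl _⟩, hu.2, le_refl _⟩
  calc edist s q + edist q t
      ≤ eVariationOn γ (Set.Icc (0:ℝ) 1 ∩ Set.Icc 0 u)
        + eVariationOn γ (Set.Icc (0:ℝ) 1 ∩ Set.Icc u 1) := add_le_add e1 e2
    _ = eVariationOn γ (Set.Icc (0:ℝ) 1 ∩ Set.Icc 0 1) := key
    _ = eVariationOn γ (Set.Icc (0:ℝ) 1) := by rw [Set.inter_self]
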